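/- arXiv:2502.07279 — 3 statements merged into one kernel-verified Lean document; each statement's English description precedes it below -/
import Mathlib

section
/- Donsker–Varadhan variational formula: for a probability measure μ and bounded measurable Q, log ∫ exp(Q) dμ = sup over probability measures π ≪ μ of (∫ Q dπ − KL(π ‖ μ)). -/
open MeasureTheory ENNReal

/-- Kullback–Leibler divergence `∫ log(dπ/dμ) dπ` (as a real integral, for `π ≪ μ`
with finite divergence). -/
noncomputable def klReal {α : Type*} [MeasurableSpace α] (π μ : Measure α) : ℝ :=
  ∫ a, Real.log ((π.rnDeriv μ) a).toReal ∂π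

/-- Donsker–Varadhan variational formula: for a probability measure `μ` and bounded
measurable `Q`, `log ∫ exp(Q) dμ` is the supremum over probability measures `π ≪ μ`
(with finite KL divergence) of `∫ Q dπ − KL(π‖μ)`. -/
theorem donsker_varadhan {α : Type*} [MeasurableSpace α]
    (μ : Measure α) [IsProbabilityMeasure μ]
    (Q : α → ℝ) (hQm : Measurable Q) (C : ℝ) (hQb : ∀ a, |Q a| ≤ C) :
    IsLUB {x : ℝ | ∃ π : Measure α, IsProbabilityMeasure π ∧ π ≪ μ ∧
        Integrable (fun a => Real.log ((π.rnDeriv μ) a).toReal) π ∧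
        x = (∫ a, Q a ∂π) - klReal π μ}
      (Real.log (∫ a, Real.exp (Q a) ∂μ)) := by
  set Z : ℝ := ∫ a, Real.exp (Q a) ∂μ with hZ
  have hexpQint : Integrable (fun a => Real.exp (Q a)) μ := by
    refine Integrable.mono' (integrable_const (Real.exp C)) hQm.exp.aestronglyMeasurable
      (ae_of_all _ fun a => ?_)
    rw [Real.norm_eq_abs, abs_of_nonneg (Real.exp_pos _).le]
    exact Real.exp_le_exp.mpr (le_of_abs_le (hQb a))
  have hZpos : 0 < Z := by
    have h1 : Real.exp (-C) ≤ Z := by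
      calc Real.exp (-C) = ∫ _a, Real.exp (-C) ∂μ := by simp
        _ ≤ Z := integral_mono (integrable_const _) hexpQint
              (fun a => Real.exp_le_exp.mpr (neg_le_of_abs_le (hQb a)))
    exact lt_of_lt_of_le (Real.exp_pos _) h1
  -- integrability of Q under any probability measure
  have hQint : ∀ (π : Measure α), IsProbabilityMeasure π → Integrable Q π := by
    intro π _
    exact Integrable.mono' (integrable_const C) hQm.aestronglyMeasurable (ae_of_all _ hQb)
  constructor
  · -- upper bound
    rintro x ⟨π, hπ, hac, hlogint, rfl⟩
    have hfpos : ∀ᵐ a ∂π, 0 < π.rnDeriv μ a := Measure.rnDeriv_pos hac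
    have hffin : ∀ᵐ a ∂π, π.rnDeriv μ a < ⊤ := hac.ae_le (Measure.rnDeriv_lt_top π μ)
    set f : α → ℝ := fun a => ((π.rnDeriv μ) a).toReal with hf
    set g : α → ℝ := fun a => Real.exp (Q a) / (Z * f a) with hg
    have hfmeas : Measurable f := (Measure.measurable_rnDeriv π μ).ennreal_toReal
    have hftpos : ∀ᵐ a ∂π, 0 < f a := by
      filter_upwards [hfpos, hffin] with a h1 h2
      exact ENNReal.toReal_pos h1.ne' h2.ne
    -- f • g is integrable wrt μ
    have hfg_bound : ∀ a, ‖f a • g a‖ ≤ Real.exp C / Z := by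
      intro a
      by_cases h0 : f a = 0
      · rw [smul_eq_mul, h0, zero_mul, norm_zero]
        exact div_nonneg (Real.exp_pos C).le hZpos.le

      · have : f a • g a = Real.exp (Q a) / Z := by
          rw [smul_eq_mul, hg]
          field_simp
        rw [this, Real.norm_eq_abs, abs_of_nonneg (by positivity)]
        gcongr
        exact le_of_abs_le (hQb a)
    have hfgint : Integrable (fun a => f a • g a) μ := by
      refine Integrable.mono' (integrable_const (Real.exp C / Z))
        ((hfmeas.smul ((hQm.exp).div ((measurable_const.mul hfmeas)))).aestronglyMeasurable)
        (ae_of_all _ hfg_bound)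
    have hgint : Integrable g π := (integrable_rnDeriv_smul_iff hac).mp hfgint
    have hintg_le : ∫ a, g a ∂π ≤ 1 := by
      have h1 : ∫ a, g a ∂π = ∫ a, f a • g a ∂μ := (integral_rnDeriv_smul hac).symm
      have h2 : ∫ a, f a • g a ∂μ ≤ ∫ a, Real.exp (Q a) / Z ∂μ := by
        refine integral_mono hfgint (hexpQint.div_const Z) (fun a => ?_)
        by_cases h0 : f a = 0
        · rw [smul_eq_mul, h0, zero_mul]
          exact div_nonneg (Real.exp_pos _).le hZpos.le

        · have : f a • g a = Real.exp (Q a) / Z := by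
            rw [smul_eq_mul, hg]
            field_simp
          rw [this]
      have h3 : ∫ a, Real.exp (Q a) / Z ∂μ = 1 := by
        rw [integral_div, ← hZ, div_self hZpos.ne']
      linarith
    -- a.e. identity for log g
    have hlogg : ∀ᵐ a ∂π, Real.log (g a) = Q a - Real.log (f a) - Real.log Z := by
      filter_upwards [hftpos] with a ha
      rw [hg, Real.log_div (Real.exp_pos _).ne' (by positivity),
        Real.log_mul hZpos.ne' ha.ne', Real.log_exp]
      ring
    have hloggint : Integrable (fun a => Real.log (g a)) π := by
      refine Integrable.congr ?_ (hlogg.mono fun a ha => ha.symm)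
      exact ((hQint π hπ).sub hlogint).sub (integrable_const (Real.log Z))
    have hintlogg : ∫ a, Real.log (g a) ∂π
        = (∫ a, Q a ∂π) - klReal π μ - Real.log Z := by
      have hi1 : Integrable (fun a => Q a - Real.log (f a)) π := (hQint π hπ).sub hlogint
      have hi2 : Integrable (fun a => Q a) π := hQint π hπ
      rw [integral_congr_ae hlogg]
      rw [integral_sub hi1 (integrable_const _), integral_sub hi2 hlogint]
      simp [klReal, hf]
    have hle : ∫ a, Real.log (g a) ∂π ≤ ∫ a, (g a - 1) ∂π := by
      refine integral_mono_ae hloggint (hgint.sub (integrable_const 1)) ?_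
      filter_upwards [hftpos] with a ha
      exact Real.log_le_sub_one_of_pos (by positivity)
    have : ∫ a, (g a - 1) ∂π = (∫ a, g a ∂π) - 1 := by
      rw [integral_sub hgint (integrable_const 1)]; simp
    rw [this] at hle
    rw [hintlogg] at hle
    linarith
  · -- least upper bound: log Z is attained
    intro y hy
    refine hy ?_
    set dens : α → ℝ≥0∞ := fun a => ENNReal.ofReal (Real.exp (Q a) / Z) with hdens
    have hdensmeas : Measurable dens := (hQm.exp.div_const Z).ennreal_ofReal
    set π₀ : Measure α := μ.withDensity dens with hπ₀
    have hint1 : Integrable (fun a => Real.exp (Q a) / Z) μ := hexpQint.div_const Z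
    have hlin : ∫⁻ a, dens a ∂μ = 1 := by
      rw [← ofReal_integral_eq_lintegral_ofReal hint1
        (ae_of_all _ fun a => by positivity)]
      rw [integral_div, ← hZ, div_self hZpos.ne']
      simp
    have hprob : IsProbabilityMeasure π₀ := by
      constructor
      rw [hπ₀, withDensity_apply _ MeasurableSet.univ, setLIntegral_univ, hlin]
    have hac0 : π₀ ≪ μ := withDensity_absolutelyContinuous μ dens
    have hrn : π₀.rnDeriv μ =ᵐ[μ] dens := Measure.rnDeriv_withDensity μ hdensmeas
    have hlogrn : ∀ᵐ a ∂μ, Real.log ((π₀.rnDeriv μ) a).toReal = Q a - Real.log Z := by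
      filter_upwards [hrn] with a ha
      rw [ha, hdens]
      rw [ENNReal.toReal_ofReal (by positivity),
        Real.log_div (Real.exp_pos _).ne' hZpos.ne', Real.log_exp]
    have hlogrn0 : ∀ᵐ a ∂π₀, Real.log ((π₀.rnDeriv μ) a).toReal = Q a - Real.log Z :=
      hac0.ae_le hlogrn
    have hlogint0 : Integrable (fun a => Real.log ((π₀.rnDeriv μ) a).toReal) π₀ := by
      refine Integrable.congr (f := fun a => Q a - Real.log Z) ?_
        (hlogrn0.mono fun a ha => ha.symm)
      exact (hQint π₀ hprob).sub (integrable_const _)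
    refine ⟨π₀, hprob, hac0, hlogint0, ?_⟩
    have hkl : klReal π₀ μ = (∫ a, Q a ∂π₀) - Real.log Z := by
      have hi2 : Integrable (fun a => Q a) π₀ := hQint π₀ hprob
      rw [klReal, integral_congr_ae hlogrn0, integral_sub hi2 (integrable_const _)]
      simp
    rw [hkl]
    ring
end

section
/- KL-regularized soft policy improvement: In a finite discounted MDP with reward R, reference policy π_d (with full support), and β > 0, define for a policy π the KL-regularized Q-function Q_π(s,a) = E[R(s₀,a₀) + Σ_{i≥1} γ^i (R(s_i,a_i) − β·KL(π(·|s_i) ‖ π_d(·|s_i)))] with (s₀,a₀)=(s,a). Let π_new(·|s) ∝ π_d(·|s)·exp(Q_π(s,a)/β). Then Q_{π_new}(s,a) ≥ Q_π(s,a) for all (s,a). -/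
/-- Discrete KL divergence `∑_a p(a)·log(p(a)/q(a))`. -/
noncomputable def klDisc {A : Type*} [Fintype A] (p q : A → ℝ) : ℝ :=
  ∑ a, p a * Real.log (p a / q a)

/-- Distribution of the state at time `i+1`, starting from state `s` and action `a`
and afterwards following policy `pol` in the MDP with transition kernel `P`. -/
def sdistFrom {S A : Type*} [Fintype S] [Fintype A]
    (P : S → A → S → ℝ) (pol : S → A → ℝ) (s : S) (a : A) : ℕ → S → ℝ
  | 0 => P s a
  | i + 1 => fun s'' => ∑ s', ∑ a', sdistFrom P pol s a i s' * pol s' a' * P s' a' s''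

/-- KL-regularized (soft) Q-function:
`Q_π(s,a) = E[R(s₀,a₀) + ∑_{i≥1} γ^i (R(s_i,a_i) − β·KL(π(·|s_i)‖π_d(·|s_i)))]`
with `(s₀,a₀) = (s,a)` and the trajectory generated by `P` and `π`. -/
noncomputable def softQ {S A : Type*} [Fintype S] [Fintype A]
    (γ β : ℝ) (R : S → A → ℝ) (P : S → A → S → ℝ) (πd pol : S → A → ℝ)
    (s : S) (a : A) : ℝ :=
  R s a + ∑' i : ℕ, γ ^ (i + 1) *
    ∑ s', sdistFrom P pol s a i s' *
      ((∑ a', pol s' a' * R s' a') - β * klDisc (pol s') (πd s'))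

section aux
variable {S A : Type*} [Fintype S] [Fintype A]
variable (P : S → A → S → ℝ) (pol : S → A → ℝ)

lemma klDisc_self (p : A → ℝ) : klDisc p p = 0 := by
  unfold klDisc
  apply Finset.sum_eq_zero
  intro a _
  rcases eq_or_ne (p a) 0 with h | h
  · simp [h]
  · simp [div_self h]

lemma klDisc_nonneg (p q : A → ℝ) (hp : ∀ a, 0 ≤ p a) (hps : ∑ a, p a = 1)
    (hq : ∀ a, 0 < q a) (hqs : ∑ a, q a = 1) : 0 ≤ klDisc p q := by
  have key : ∀ a ∈ Finset.univ, p a - q a ≤ p a * Real.log (p a / q a) := by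
    intro a _
    rcases eq_or_lt_of_le (hp a) with h | h
    · simp [← h]; exact (hq a).le
    · have hd : 0 < q a / p a := div_pos (hq a) h
      have h0 := Real.log_le_sub_one_of_pos hd
      have hinv : Real.log (q a / p a) = - Real.log (p a / q a) := by
        rw [← Real.log_inv, inv_div]
      have h1 : 1 - q a / p a ≤ Real.log (p a / q a) := by linarith
      have h2 : p a * (1 - q a / p a) ≤ p a * Real.log (p a / q a) :=
        mul_le_mul_of_nonneg_left h1 h.le
      have h3 : p a * (1 - q a / p a) = p a - q a := by
        field_simp
      linarith
  have := Finset.sum_le_sum key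
  simpa [klDisc, Finset.sum_sub_distrib, hps, hqs] using this

lemma sdist_nonneg (hP : ∀ s a s', 0 ≤ P s a s') (hpol : ∀ s a, 0 ≤ pol s a)
    (s : S) (a : A) : ∀ i s', 0 ≤ sdistFrom P pol s a i s' := by
  intro i
  induction i with
  | zero => intro s'; exact hP s a s'
  | succ i ih =>
    intro s''
    apply Finset.sum_nonneg; intro s' _
    apply Finset.sum_nonneg; intro a' _
    exact mul_nonneg (mul_nonneg (ih s') (hpol s' a')) (hP s' a' s'')

lemma sdist_sum (hPsum : ∀ s a, ∑ s', P s a s' = 1) (hpolsum : ∀ s, ∑ a, pol s a = 1)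
    (s : S) (a : A) : ∀ i, ∑ s', sdistFrom P pol s a i s' = 1 := by
  intro i
  induction i with
  | zero => exact hPsum s a
  | succ i ih =>
    show ∑ s'', ∑ s', ∑ a', sdistFrom P pol s a i s' * pol s' a' * P s' a' s'' = 1
    rw [Finset.sum_comm]
    calc ∑ s', ∑ s'', ∑ a', sdistFrom P pol s a i s' * pol s' a' * P s' a' s''
        = ∑ s', sdistFrom P pol s a i s' := by
          apply Finset.sum_congr rfl; intro s' _
          rw [Finset.sum_comm]
          calc ∑ a', ∑ s'', sdistFrom P pol s a i s' * pol s' a' * P s' a' s''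
              = ∑ a', sdistFrom P pol s a i s' * pol s' a' := by
                apply Finset.sum_congr rfl; intro a' _
                rw [← Finset.mul_sum, hPsum s' a', mul_one]
            _ = sdistFrom P pol s a i s' := by
                rw [← Finset.mul_sum, hpolsum s', mul_one]
      _ = 1 := ih

lemma sum4_comm (g : S → A → S → A → ℝ) :
    ∑ s', ∑ a', ∑ s₁, ∑ a₁, g s' a' s₁ a₁ = ∑ s₁, ∑ a₁, ∑ s', ∑ a', g s' a' s₁ a₁ := by
  have h1 : ∑ p : S × A, ∑ q : S × A, g p.1 p.2 q.1 q.2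
      = ∑ s', ∑ a', ∑ s₁, ∑ a₁, g s' a' s₁ a₁ := by
    simp only [Fintype.sum_prod_type]
  have h2 : ∑ q : S × A, ∑ p : S × A, g p.1 p.2 q.1 q.2
      = ∑ s₁, ∑ a₁, ∑ s', ∑ a', g s' a' s₁ a₁ := by
    simp only [Fintype.sum_prod_type]
  rw [← h1, ← h2, Finset.sum_comm]

lemma sdist_shift (s : S) (a : A) (i : ℕ) (s'' : S) :
    sdistFrom P pol s a (i + 1) s'' =
      ∑ s₁, P s a s₁ * ∑ a₁, pol s₁ a₁ * sdistFrom P pol s₁ a₁ i s'' := by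
  induction i generalizing s'' with
  | zero =>
    show ∑ s', ∑ a', P s a s' * pol s' a' * P s' a' s'' = _
    apply Finset.sum_congr rfl; intro s₁ _
    rw [Finset.mul_sum]
    apply Finset.sum_congr rfl; intro a₁ _
    show P s a s₁ * pol s₁ a₁ * P s₁ a₁ s'' = P s a s₁ * (pol s₁ a₁ * P s₁ a₁ s'')
    ring
  | succ i ih =>
    show ∑ s', ∑ a', sdistFrom P pol s a (i+1) s' * pol s' a' * P s' a' s'' = _
    have step1 : ∑ s', ∑ a', sdistFrom P pol s a (i+1) s' * pol s' a' * P s' a' s''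
        = ∑ s', ∑ a', ∑ s₁, ∑ a₁,
            P s a s₁ * (pol s₁ a₁ * sdistFrom P pol s₁ a₁ i s') * pol s' a' * P s' a' s'' := by
      apply Finset.sum_congr rfl; intro s' _
      apply Finset.sum_congr rfl; intro a' _
      rw [ih]
      simp only [Finset.sum_mul, Finset.mul_sum]
    rw [step1, sum4_comm]
    apply Finset.sum_congr rfl; intro s₁ _
    rw [Finset.mul_sum]
    apply Finset.sum_congr rfl; intro a₁ _
    show _ = P s a s₁ * (pol s₁ a₁ * ∑ s', ∑ a', sdistFrom P pol s₁ a₁ i s' * pol s' a' * P s' a' s'')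
    simp only [Finset.mul_sum]
    apply Finset.sum_congr rfl; intro s' _
    apply Finset.sum_congr rfl; intro a' _
    ring

lemma term_summable (γ : ℝ) (hγ : γ ∈ Set.Ioo (0:ℝ) 1)
    (hP : ∀ s a s', 0 ≤ P s a s') (hPsum : ∀ s a, ∑ s', P s a s' = 1)
    (hpol : ∀ s a, 0 ≤ pol s a) (hpolsum : ∀ s, ∑ a, pol s a = 1)
    (f : S → ℝ) (s : S) (a : A) :
    Summable (fun i : ℕ => γ ^ (i+1) * ∑ s', sdistFrom P pol s a i s' * f s') := by
  set C := ∑ s', |f s'| with hC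
  have hgeo : Summable (fun i : ℕ => C * γ ^ (i+1)) := by
    have h0 : Summable (fun i : ℕ => γ ^ i) :=
      summable_geometric_of_lt_one hγ.1.le hγ.2
    apply (h0.mul_left (C * γ)).congr
    intro i
    ring
  apply Summable.of_norm_bounded hgeo
  intro i
  rw [Real.norm_eq_abs, abs_mul, abs_pow, abs_of_pos hγ.1, mul_comm C (γ ^ (i+1))]
  apply mul_le_mul_of_nonneg_left _ (pow_nonneg hγ.1.le _)
  calc |∑ s', sdistFrom P pol s a i s' * f s'|
      ≤ ∑ s', |sdistFrom P pol s a i s' * f s'| := Finset.abs_sum_le_sum_abs _ _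
    _ ≤ ∑ s', |f s'| := by
        apply Finset.sum_le_sum
        intro s' _
        rw [abs_mul, abs_of_nonneg (sdist_nonneg P pol hP hpol s a i s')]
        have h1 : sdistFrom P pol s a i s' ≤ 1 := by
          have := Finset.single_le_sum (f := fun s' => sdistFrom P pol s a i s')
            (fun x _ => sdist_nonneg P pol hP hpol s a i x) (Finset.mem_univ s')
          rw [sdist_sum P pol hPsum hpolsum s a i] at this
          exact this
        nlinarith [abs_nonneg (f s')]

lemma softQ_rec (γ β : ℝ) (hγ : γ ∈ Set.Ioo (0:ℝ) 1)
    (R : S → A → ℝ)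
    (hP : ∀ s a s', 0 ≤ P s a s') (hPsum : ∀ s a, ∑ s', P s a s' = 1)
    (πd : S → A → ℝ)
    (hpol : ∀ s a, 0 ≤ pol s a) (hpolsum : ∀ s, ∑ a, pol s a = 1)
    (s : S) (a : A) :
    softQ γ β R P πd pol s a = R s a + γ * ∑ s', P s a s' *
      ((∑ a', pol s' a' * softQ γ β R P πd pol s' a') - β * klDisc (pol s') (πd s')) := by
  set f : S → ℝ := fun s' => (∑ a', pol s' a' * R s' a') - β * klDisc (pol s') (πd s') with hfdef
  set v : S → A → ℕ → ℝ :=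
    fun s a i => γ ^ (i+1) * ∑ s', sdistFrom P pol s a i s' * f s' with hvdef
  have hf : ∀ s', f s' = (∑ a', pol s' a' * R s' a') - β * klDisc (pol s') (πd s') :=
    fun _ => rfl
  have hv : ∀ s a i, v s a i = γ ^ (i+1) * ∑ s', sdistFrom P pol s a i s' * f s' :=
    fun _ _ _ => rfl
  have hsum : ∀ s a, Summable (v s a) := fun s a =>
    term_summable P pol γ hγ hP hPsum hpol hpolsum f s a
  have hQ : ∀ s a, softQ γ β R P πd pol s a = R s a + ∑' i, v s a i := fun s a => rfl
  have hv0 : v s a 0 = γ * ∑ s', P s a s' * f s' := by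
    rw [hv, pow_one]
    rfl
  clear_value f v
  have tail_eq : ∀ j : ℕ, v s a (j+1)
      = ∑ s₁, P s a s₁ * ∑ a₁, pol s₁ a₁ * (γ * v s₁ a₁ j) := by
    intro j
    have key : ∑ s'', sdistFrom P pol s a (j+1) s'' * f s''
        = ∑ s₁, P s a s₁ * ∑ a₁, pol s₁ a₁ * ∑ s'', sdistFrom P pol s₁ a₁ j s'' * f s'' := by
      calc ∑ s'', sdistFrom P pol s a (j+1) s'' * f s''
          = ∑ s'', ∑ s₁, ∑ a₁,
              P s a s₁ * (pol s₁ a₁ * sdistFrom P pol s₁ a₁ j s'') * f s'' := by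
            apply Finset.sum_congr rfl; intro s'' _
            rw [sdist_shift]
            simp only [Finset.sum_mul, Finset.mul_sum]
        _ = ∑ s₁, ∑ s'', ∑ a₁,
              P s a s₁ * (pol s₁ a₁ * sdistFrom P pol s₁ a₁ j s'') * f s'' := by
            rw [Finset.sum_comm]
        _ = ∑ s₁, ∑ a₁, ∑ s'',
              P s a s₁ * (pol s₁ a₁ * sdistFrom P pol s₁ a₁ j s'') * f s'' := by
            apply Finset.sum_congr rfl; intro s₁ _
            rw [Finset.sum_comm]
        _ = ∑ s₁, P s a s₁ * ∑ a₁, pol s₁ a₁ * ∑ s'', sdistFrom P pol s₁ a₁ j s'' * f s'' := by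
            apply Finset.sum_congr rfl; intro s₁ _
            rw [Finset.mul_sum]
            apply Finset.sum_congr rfl; intro a₁ _
            rw [Finset.mul_sum, Finset.mul_sum]
            apply Finset.sum_congr rfl; intro s'' _
            ring
    rw [hv, key, Finset.mul_sum]
    apply Finset.sum_congr rfl; intro s₁ _
    rw [Finset.mul_sum, Finset.mul_sum, Finset.mul_sum]
    apply Finset.sum_congr rfl; intro a₁ _
    rw [hv]
    ring
  have hsum_inner : ∀ s₁ : S,
      Summable (fun j => P s a s₁ * ∑ a₁, pol s₁ a₁ * (γ * v s₁ a₁ j)) := by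
    intro s₁
    apply Summable.mul_left
    apply summable_sum
    intro a₁ _
    exact ((hsum s₁ a₁).mul_left γ).mul_left (pol s₁ a₁)
  have htail : ∑' j, v s a (j+1)
      = ∑ s₁, P s a s₁ * ∑ a₁, pol s₁ a₁ * (γ * ∑' j, v s₁ a₁ j) := by
    calc ∑' j, v s a (j+1)
        = ∑' j, ∑ s₁, P s a s₁ * ∑ a₁, pol s₁ a₁ * (γ * v s₁ a₁ j) := tsum_congr tail_eq
      _ = ∑ s₁, ∑' j, P s a s₁ * ∑ a₁, pol s₁ a₁ * (γ * v s₁ a₁ j) :=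
          Summable.tsum_finsetSum (fun s₁ _ => hsum_inner s₁)
      _ = ∑ s₁, P s a s₁ * ∑ a₁, pol s₁ a₁ * (γ * ∑' j, v s₁ a₁ j) := by
          apply Finset.sum_congr rfl; intro s₁ _
          rw [tsum_mul_left]
          congr 1
          rw [Summable.tsum_finsetSum (fun a₁ _ => ((hsum s₁ a₁).mul_left γ).mul_left (pol s₁ a₁))]
          apply Finset.sum_congr rfl; intro a₁ _
          rw [tsum_mul_left, tsum_mul_left]
  have hQexp : ∀ s₁ a₁, ∑' j, v s₁ a₁ j = softQ γ β R P πd pol s₁ a₁ - R s₁ a₁ := by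
    intro s₁ a₁; rw [hQ s₁ a₁]; ring
  rw [hQ, Summable.tsum_eq_zero_add (hsum s a), htail, hv0]
  simp only [hQexp]
  congr 1
  rw [Finset.mul_sum, Finset.mul_sum, ← Finset.sum_add_distrib]
  apply Finset.sum_congr rfl; intro s' _
  rw [hf]
  have inner : ∑ a₁, pol s' a₁ * (γ * (softQ γ β R P πd pol s' a₁ - R s' a₁))
      = γ * ((∑ a₁, pol s' a₁ * softQ γ β R P πd pol s' a₁) - ∑ a₁, pol s' a₁ * R s' a₁) := by
    rw [mul_sub, Finset.mul_sum, Finset.mul_sum, ← Finset.sum_sub_distrib]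
    apply Finset.sum_congr rfl; intro a₁ _
    ring
  rw [inner]
  ring

end aux

section improve
variable {S A : Type*} [Fintype S] [Fintype A]

lemma value_identity [Nonempty A] (β : ℝ) (hβ : 0 < β) (q πdS : A → ℝ)
    (hπd : ∀ a, 0 < πdS a)
    (p : A → ℝ) (hp : ∀ a, 0 ≤ p a) (hps : ∑ a, p a = 1) :
    (∑ a, p a * q a) - β * klDisc p πdS
      = β * Real.log (∑ a', πdS a' * Real.exp (q a' / β))
        - β * klDisc p
            (fun a => πdS a * Real.exp (q a / β) / ∑ a', πdS a' * Real.exp (q a' / β)) := by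
  set Z := ∑ a', πdS a' * Real.exp (q a' / β) with hZ
  have hZpos : 0 < Z :=
    Finset.sum_pos (fun a' _ => mul_pos (hπd a') (Real.exp_pos _)) Finset.univ_nonempty
  have hterm : ∀ a, p a * Real.log (p a / (πdS a * Real.exp (q a / β) / Z))
      = p a * Real.log (p a / πdS a) - p a * (q a / β) + p a * Real.log Z := by
    intro a
    rcases eq_or_lt_of_le (hp a) with h | h
    · simp [← h]
    · have hπe : (0:ℝ) < πdS a * Real.exp (q a / β) := mul_pos (hπd a) (Real.exp_pos _)
      have hne : πdS a * Real.exp (q a / β) / Z ≠ 0 := by positivity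
      rw [Real.log_div h.ne' hne, Real.log_div hπe.ne' hZpos.ne',
          Real.log_mul (hπd a).ne' (Real.exp_pos _).ne', Real.log_exp,
          Real.log_div h.ne' (hπd a).ne']
      ring
  have hkl : klDisc p (fun a => πdS a * Real.exp (q a / β) / Z)
      = klDisc p πdS - (∑ a, p a * q a) / β + Real.log Z := by
    simp only [klDisc]
    calc ∑ a, p a * Real.log (p a / (πdS a * Real.exp (q a / β) / Z))
        = ∑ a, (p a * Real.log (p a / πdS a) - p a * (q a / β) + p a * Real.log Z) :=
          Finset.sum_congr rfl fun a _ => hterm a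
      _ = (∑ a, p a * Real.log (p a / πdS a)) - (∑ a, p a * (q a / β))
            + (∑ a, p a * Real.log Z) := by
          rw [Finset.sum_add_distrib, Finset.sum_sub_distrib]
      _ = _ := by
          have e1 : ∑ a, p a * (q a / β) = (∑ a, p a * q a) / β := by
            rw [Finset.sum_div]
            apply Finset.sum_congr rfl; intro a _; ring
          have e2 : ∑ a, p a * Real.log Z = Real.log Z := by
            rw [← Finset.sum_mul, hps, one_mul]
          rw [e1, e2]
  rw [hkl]
  field_simp
  ring

end improve

/-- KL-regularized soft policy improvement: if
`π_new(·|s) ∝ π_d(·|s)·exp(Q_π(s,·)/β)`, then `Q_{π_new}(s,a) ≥ Q_π(s,a)` for all `(s,a)`. -/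
theorem soft_policy_improvement {S A : Type*} [Fintype S] [Fintype A]
    (γ : ℝ) (hγ : γ ∈ Set.Ioo (0 : ℝ) 1) (β : ℝ) (hβ : 0 < β)
    (R : S → A → ℝ)
    (P : S → A → S → ℝ) (hP : ∀ s a s', 0 ≤ P s a s') (hPsum : ∀ s a, ∑ s', P s a s' = 1)
    (πd : S → A → ℝ) (hπd : ∀ s a, 0 < πd s a) (hπdsum : ∀ s, ∑ a, πd s a = 1)
    (pol : S → A → ℝ) (hpol : ∀ s a, 0 ≤ pol s a) (hpolsum : ∀ s, ∑ a, pol s a = 1)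
    (πnew : S → A → ℝ)
    (hπnew : ∀ s a, πnew s a =
      πd s a * Real.exp (softQ γ β R P πd pol s a / β) /
        ∑ a', πd s a' * Real.exp (softQ γ β R P πd pol s a' / β)) :
    ∀ s a, softQ γ β R P πd pol s a ≤ softQ γ β R P πd πnew s a := by
  intro s₂ a₂
  haveI : Nonempty A := ⟨a₂⟩
  have hZpos : ∀ s, (0:ℝ) < ∑ a', πd s a' * Real.exp (softQ γ β R P πd pol s a' / β) :=
    fun s => Finset.sum_pos (fun a' _ => mul_pos (hπd s a') (Real.exp_pos _))
      Finset.univ_nonempty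
  have hnew_pos : ∀ s a, 0 < πnew s a := by
    intro s a
    rw [hπnew]
    exact div_pos (mul_pos (hπd s a) (Real.exp_pos _)) (hZpos s)
  have hnew_sum : ∀ s, ∑ a, πnew s a = 1 := by
    intro s
    calc ∑ a, πnew s a
        = ∑ a, πd s a * Real.exp (softQ γ β R P πd pol s a / β) /
            ∑ a', πd s a' * Real.exp (softQ γ β R P πd pol s a' / β) :=
          Finset.sum_congr rfl fun a _ => hπnew s a
      _ = 1 := by rw [← Finset.sum_div, div_self (hZpos s).ne']
  -- one-step improvement at each state
  have himp : ∀ s', (∑ a', pol s' a' * softQ γ β R P πd pol s' a')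
        - β * klDisc (pol s') (πd s')
      ≤ (∑ a', πnew s' a' * softQ γ β R P πd pol s' a')
        - β * klDisc (πnew s') (πd s') := by
    intro s'
    have hfun : (fun a => πd s' a * Real.exp (softQ γ β R P πd pol s' a / β) /
        ∑ a', πd s' a' * Real.exp (softQ γ β R P πd pol s' a' / β)) = πnew s' := by
      funext a'
      rw [hπnew]
    have h1 := value_identity β hβ (fun a' => softQ γ β R P πd pol s' a') (πd s')
      (hπd s') (pol s') (hpol s') (hpolsum s')
    have h2 := value_identity β hβ (fun a' => softQ γ β R P πd pol s' a') (πd s')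
      (hπd s') (πnew s') (fun a' => (hnew_pos s' a').le) (hnew_sum s')
    rw [hfun] at h1 h2
    have h3 : klDisc (πnew s') (πnew s') = 0 := klDisc_self _
    have h4 : 0 ≤ klDisc (pol s') (πnew s') :=
      klDisc_nonneg _ _ (hpol s') (hpolsum s') (hnew_pos s') (hnew_sum s')
    have h5 : 0 ≤ β * klDisc (pol s') (πnew s') := mul_nonneg hβ.le h4
    have h6 : β * klDisc (πnew s') (πnew s') = 0 := by rw [h3, mul_zero]
    linarith
  -- minimum of the difference
  obtain ⟨⟨s₀, a₀⟩, -, hmin⟩ := Finset.exists_min_image Finset.univ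
    (fun p : S × A => softQ γ β R P πd πnew p.1 p.2 - softQ γ β R P πd pol p.1 p.2)
    ⟨(s₂, a₂), Finset.mem_univ _⟩
  set m := softQ γ β R P πd πnew s₀ a₀ - softQ γ β R P πd pol s₀ a₀ with hm
  have hmin' : ∀ s a, m ≤ softQ γ β R P πd πnew s a - softQ γ β R P πd pol s a :=
    fun s a => hmin (s, a) (Finset.mem_univ _)
  have key : ∀ s a, γ * m ≤ softQ γ β R P πd πnew s a - softQ γ β R P πd pol s a := by
    intro s a
    have b1 := softQ_rec P pol γ β hγ R hP hPsum πd hpol hpolsum s a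
    have b2 := softQ_rec P πnew γ β hγ R hP hPsum πd
      (fun s a => (hnew_pos s a).le) hnew_sum s a
    have hBs : ∀ s' ∈ Finset.univ,
        P s a s' * ((∑ a', pol s' a' * softQ γ β R P πd pol s' a')
            - β * klDisc (pol s') (πd s') + m)
        ≤ P s a s' * ((∑ a', πnew s' a' * softQ γ β R P πd πnew s' a')
            - β * klDisc (πnew s') (πd s')) := by
      intro s' _
      apply mul_le_mul_of_nonneg_left _ (hP s a s')
      have e1 : ∑ a', πnew s' a' * softQ γ β R P πd πnew s' a'
          = (∑ a', πnew s' a' * softQ γ β R P πd pol s' a')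
            + ∑ a', πnew s' a' * (softQ γ β R P πd πnew s' a' - softQ γ β R P πd pol s' a') := by
        rw [← Finset.sum_add_distrib]
        apply Finset.sum_congr rfl; intro a' _
        ring
      have e2 : m ≤ ∑ a', πnew s' a' *
          (softQ γ β R P πd πnew s' a' - softQ γ β R P πd pol s' a') := by
        calc m = ∑ a', πnew s' a' * m := by
              rw [← Finset.sum_mul, hnew_sum, one_mul]
          _ ≤ _ := Finset.sum_le_sum fun a' _ =>
              mul_le_mul_of_nonneg_left (hmin' s' a') (hnew_pos s' a').le
      rw [e1]
      linarith [himp s']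
    have hsum_le := Finset.sum_le_sum hBs
    have expand : ∑ s', P s a s' * ((∑ a', pol s' a' * softQ γ β R P πd pol s' a')
          - β * klDisc (pol s') (πd s') + m)
        = (∑ s', P s a s' * ((∑ a', pol s' a' * softQ γ β R P πd pol s' a')
            - β * klDisc (pol s') (πd s'))) + m := by
      simp only [mul_add]
      rw [Finset.sum_add_distrib, ← Finset.sum_mul, hPsum, one_mul]
    rw [expand] at hsum_le
    nlinarith [hγ.1]
  have hm0 : 0 ≤ m := by nlinarith [key s₀ a₀, hγ.2, hγ.1]
  linarith [hmin' s₂ a₂]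
end

section
/- For the simplex H = conv{e₁,…,e_S} ⊂ ℝ^S with barycenter O = (1/S,…,1/S), the central symmetrization ratio u(O) = vol((2O−H) ∩ H)/vol(H) satisfies u(O) ≥ 1/(S−1)^{S−1}. -/
open MeasureTheory
open scoped ENNReal NNReal

/-- For the standard probability simplex `H = conv{e₁,…,e_S} ⊂ ℝ^S` with barycenter
`O = (1/S,…,1/S)`, the central symmetrization ratio
`u(O) = vol((2O−H) ∩ H)/vol(H)` (with `(S-1)`-dimensional Hausdorff volume)
satisfies `u(O) ≥ 1/(S−1)^{S−1}`. -/
theorem simplex_symmetrization_ratio_lower_bound (S : ℕ) (hS : 2 ≤ S)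
    (H : Set (EuclideanSpace ℝ (Fin S))) (O : EuclideanSpace ℝ (Fin S))
    (hH : H = convexHull ℝ (Set.range fun k : Fin S => (EuclideanSpace.single k (1 : ℝ))))
    (hO : O = (WithLp.toLp 2 (fun _ : Fin S => (1 : ℝ) / S) : EuclideanSpace ℝ (Fin S))) :
    (1 : ℝ) / ((S : ℝ) - 1) ^ (S - 1) ≤
      (μH[(S : ℝ) - 1] (((fun x => (2 : ℝ) • O - x) '' H) ∩ H)).toReal /
        (μH[(S : ℝ) - 1] H).toReal := by
  obtain ⟨n, rfl⟩ : ∃ n, S = n + 1 := ⟨S - 1, by omega⟩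
  have hn1 : 1 ≤ n := by omega
  have hn0R : (0 : ℝ) < n := by exact_mod_cast Nat.pos_of_ne_zero (by omega)
  have hn1R : (1 : ℝ) ≤ n := by exact_mod_cast hn1
  have hd : ((n + 1 : ℕ) : ℝ) - 1 = (n : ℝ) := by push_cast; ring
  rw [hd]
  rw [show n + 1 - 1 = n from rfl]
  -- characterization of H
  have hHs : H = {x : EuclideanSpace ℝ (Fin (n + 1)) | (∀ i, 0 ≤ x i) ∧ ∑ i, x i = 1} := by
    rw [hH]
    have hst := convexHull_basis_eq_stdSimplex (R := ℝ) (ι := Fin (n + 1))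
    have himg := (WithLp.linearEquiv 2 ℝ (Fin (n + 1) → ℝ)).symm.toLinearMap.image_convexHull
      (Set.range fun i j : Fin (n + 1) => if i = j then (1 : ℝ) else 0)
    rw [hst, ← Set.range_comp] at himg
    have hrange : ((⇑(WithLp.linearEquiv 2 ℝ (Fin (n + 1) → ℝ)).symm.toLinearMap) ∘
        fun i j : Fin (n + 1) => if i = j then (1 : ℝ) else 0) =
        fun k : Fin (n + 1) => EuclideanSpace.single k (1 : ℝ) := by
      funext k
      ext j
      rcases eq_or_ne k j with h | h
      · simp [EuclideanSpace.single_apply, h]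
      · simp [EuclideanSpace.single_apply, h, Ne.symm h]
    rw [hrange] at himg
    rw [← himg]
    ext x
    constructor
    · rintro ⟨y, hy, rfl⟩
      exact hy
    · intro hx
      exact ⟨x.ofLp, hx, rfl⟩
  set g : EuclideanSpace ℝ (Fin (n + 1)) → EuclideanSpace ℝ (Fin (n + 1)) :=
    fun x => (WithLp.toLp 2 (fun i => (1 - x i) / (n : ℝ)) : EuclideanSpace ℝ (Fin (n + 1))) with hg
  set Kn : ℝ≥0 := (n : ℝ≥0) with hKn
  have hKnR : (Kn : ℝ) = (n : ℝ) := by simp [hKn]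
  -- step A : g '' H is inside the intersection
  have hOc : ((n : ℝ) + 1) ≠ 0 := by positivity
  have hnne : (n : ℝ) ≠ 0 := ne_of_gt hn0R
  have h_sub : g '' H ⊆ ((fun x => (2 : ℝ) • O - x) '' H) ∩ H := by
    rintro _ ⟨x, hx, rfl⟩
    rw [hHs] at hx
    obtain ⟨hx0, hx1⟩ := hx
    have hxle : ∀ i, x i ≤ 1 := by
      intro i
      rw [← hx1]
      exact Finset.single_le_sum (fun j _ => hx0 j) (Finset.mem_univ i)
    constructor
    · refine ⟨(WithLp.toLp 2 (fun i => 2 / ((n : ℝ) + 1) - (1 - x i) / (n : ℝ)) :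
        EuclideanSpace ℝ (Fin (n + 1))), ?_, ?_⟩
      · rw [hHs]
        constructor
        · intro i
          have h1 : (1 - x i) / (n : ℝ) ≤ 1 / (n : ℝ) := by
            gcongr
            linarith [hx0 i]
          have h2 : 1 / (n : ℝ) ≤ 2 / ((n : ℝ) + 1) := by
            rw [div_le_div_iff₀ hn0R (by positivity)]
            linarith
          linarith
        · rw [Finset.sum_sub_distrib, Finset.sum_const, Finset.card_univ, Fintype.card_fin,
            ← Finset.sum_div, Finset.sum_sub_distrib, Finset.sum_const, Finset.card_univ,
            Fintype.card_fin, hx1]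
          push_cast [nsmul_eq_mul]
          field_simp
          ring
      · ext i
        simp only [hO, PiLp.sub_apply, PiLp.smul_apply, smul_eq_mul]
        push_cast
        show 2 * (1 / ((n : ℝ) + 1)) - (2 / ((n : ℝ) + 1) - (1 - x i) / (n : ℝ))
          = (1 - x i) / (n : ℝ)
        ring
    · rw [hHs]
      refine ⟨fun i => div_nonneg (by linarith [hxle i]) (le_of_lt hn0R), ?_⟩
      rw [← Finset.sum_div, Finset.sum_sub_distrib, Finset.sum_const, Finset.card_univ,
        Fintype.card_fin, hx1]
      push_cast [nsmul_eq_mul]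
      field_simp
      ring
  -- step B : H is a Lipschitz image of g '' H
  have h_HleKg : μH[(n : ℝ)] H ≤ (Kn : ℝ≥0∞) ^ (n : ℝ) * μH[(n : ℝ)] (g '' H) := by
    set ginv : EuclideanSpace ℝ (Fin (n + 1)) → EuclideanSpace ℝ (Fin (n + 1)) :=
      fun y => (WithLp.toLp 2 (fun i => 1 - (n : ℝ) * y i) : EuclideanSpace ℝ (Fin (n + 1))) with hgi
    have himg : ginv '' (g '' H) = H := by
      rw [← Set.image_comp]
      have hcomp : ginv ∘ g = id := by
        funext x
        ext i
        show 1 - (n : ℝ) * ((1 - x i) / (n : ℝ)) = x i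
        field_simp
        ring
      rw [hcomp, Set.image_id]
    have hLip : LipschitzWith Kn ginv := by
      apply LipschitzWith.of_dist_le_mul
      intro a b
      have hsb : ginv a - ginv b = (n : ℝ) • (b - a) := by
        ext i
        simp only [hgi, PiLp.sub_apply, PiLp.smul_apply, smul_eq_mul]
        ring
      rw [dist_eq_norm, hsb, norm_smul, dist_eq_norm']
      simp [hKnR]
    calc μH[(n : ℝ)] H = μH[(n : ℝ)] (ginv '' (g '' H)) := by rw [himg]
      _ ≤ (Kn : ℝ≥0∞) ^ (n : ℝ) * μH[(n : ℝ)] (g '' H) :=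
        hLip.hausdorffMeasure_image_le (by positivity) _
  -- step C : positivity and finiteness
  -- transfer to the pi type with sup metric
  set q' : (Fin (n + 1) → ℝ) → (Fin n → ℝ) := fun x i => x i.castSucc with hq'def
  set r' : (Fin n → ℝ) → (Fin (n + 1) → ℝ) :=
    fun y i => if h : (i : ℕ) < n then y ⟨i, h⟩ else 1 - ∑ j, y j with hr'def
  set T : Set (Fin n → ℝ) := {y | (∀ i, 0 ≤ y i) ∧ ∑ i, y i ≤ 1} with hTdef
  have hμT : μH[(n : ℝ)] T = volume T := by
    rw [show ((n : ℝ)) = ((Fintype.card (Fin n) : ℕ) : ℝ) by simp, hausdorffMeasure_pi_real]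
  have hcastr' : ∀ (y : Fin n → ℝ) (i : Fin n), r' y i.castSucc = y i := by
    intro y i
    have h : ((i.castSucc : Fin (n + 1)) : ℕ) < n := by simp
    simp only [hr'def]
    rw [dif_pos h]
    congr 1
    all_goals exact Fin.ext (by simp)
  have hlastr' : ∀ y : Fin n → ℝ, r' y (Fin.last n) = 1 - ∑ j, y j := by
    intro y
    simp only [hr'def]
    rw [dif_neg (by simp)]
  have hq' : LipschitzWith 1 (q' ∘ ⇑(WithLp.equiv 2 (Fin (n + 1) → ℝ))) := by
    have h1 : LipschitzWith 1 q' := by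
      apply LipschitzWith.of_dist_le_mul
      intro a b
      rw [NNReal.coe_one, one_mul, dist_pi_le_iff dist_nonneg]
      intro i
      exact dist_le_pi_dist a b i.castSucc
    have h2 := h1.comp (PiLp.lipschitzWith_ofLp 2 _)
    rw [mul_one] at h2
    exact h2
  have hr' : LipschitzWith Kn r' := by
    apply LipschitzWith.of_dist_le_mul
    intro a b
    rw [hKnR, dist_pi_le_iff (by positivity)]
    intro i
    by_cases h : (i : ℕ) < n
    · simp only [hr'def]
      rw [dif_pos h, dif_pos h]
      calc dist (a ⟨i, h⟩) (b ⟨i, h⟩) ≤ dist a b := dist_le_pi_dist a b _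
        _ ≤ (n : ℝ) * dist a b := le_mul_of_one_le_left dist_nonneg hn1R
    · simp only [hr'def]
      rw [dif_neg h, dif_neg h, dist_sub_left]
      calc dist (∑ j, a j) (∑ j, b j) ≤ ∑ j, dist (a j) (b j) := dist_sum_sum_le _ _ _
        _ ≤ (Finset.univ : Finset (Fin n)).card • dist a b :=
            Finset.sum_le_card_nsmul _ _ _ (fun j _ => dist_le_pi_dist a b j)
        _ = (n : ℝ) * dist a b := by simp [nsmul_eq_mul]
  have hp2e : LipschitzWith ((Fintype.card (Fin (n + 1)) : ℝ≥0) ^ (1 / (2 : ℝ≥0∞)).toReal)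
      (⇑(WithLp.equiv 2 (Fin (n + 1) → ℝ)).symm) :=
    (PiLp.antilipschitzWith_ofLp 2 _).to_rightInverse (WithLp.equiv 2 _).right_inv
  have hQT : (q' ∘ ⇑(WithLp.equiv 2 (Fin (n + 1) → ℝ))) '' H = T := by
    ext y
    constructor
    · rintro ⟨x, hx, rfl⟩
      rw [hHs] at hx
      refine ⟨fun i => hx.1 _, ?_⟩
      have hsum := Fin.sum_univ_castSucc (f := fun i : Fin (n + 1) => x i)
      have hl : 0 ≤ x (Fin.last n) := hx.1 _
      show ∑ i : Fin n, x i.castSucc ≤ 1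
      rw [← hx.2, hsum]
      linarith
    · rintro ⟨hy0, hy1⟩
      refine ⟨(WithLp.equiv 2 (Fin (n + 1) → ℝ)).symm (r' y), ?_, ?_⟩
      · rw [hHs]
        constructor
        · intro i
          show 0 ≤ r' y i
          simp only [hr'def]
          split
          · exact hy0 _
          · linarith
        · show ∑ i, r' y i = 1
          rw [Fin.sum_univ_castSucc (f := fun i : Fin (n + 1) => r' y i)]
          simp only [hcastr', hlastr']
          ring
      · funext i
        show r' y i.castSucc = y i
        exact hcastr' y i
  have hRT : (⇑(WithLp.equiv 2 (Fin (n + 1) → ℝ)).symm ∘ r') '' T = H := by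
    ext x
    constructor
    · rintro ⟨y, ⟨hy0, hy1⟩, rfl⟩
      rw [hHs]
      constructor
      · intro i
        show 0 ≤ r' y i
        simp only [hr'def]
        split
        · exact hy0 _
        · linarith
      · show ∑ i, r' y i = 1
        rw [Fin.sum_univ_castSucc (f := fun i : Fin (n + 1) => r' y i)]
        simp only [hcastr', hlastr']
        ring
    · intro hx
      rw [hHs] at hx
      have hxle1 : ∑ i : Fin n, x i.castSucc ≤ 1 := by
        have hsum := Fin.sum_univ_castSucc (f := fun i : Fin (n + 1) => x i)
        have hl : 0 ≤ x (Fin.last n) := hx.1 _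
        rw [← hx.2, hsum]
        linarith
      refine ⟨fun i => x i.castSucc, ⟨fun i => hx.1 _, hxle1⟩, ?_⟩
      ext i
      show r' (fun j => x j.castSucc) i = x i
      by_cases h : (i : ℕ) < n
      · simp only [hr'def]
        rw [dif_pos h]
        rfl
      · simp only [hr'def]
        rw [dif_neg h]
        have hin : (i : ℕ) = n := by have := i.isLt; omega
        have hi : i = Fin.last n := Fin.ext (by simp [Fin.val_last, hin])
        subst hi
        have hsum := Fin.sum_univ_castSucc (f := fun i : Fin (n + 1) => x i)
        have h2 := hx.2
        rw [hsum] at h2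
        linarith
  -- positivity and finiteness of the volume of T
  have hTpos : (0 : ℝ≥0∞) < volume T := by
    have hB : (Set.univ.pi fun _ : Fin n => Set.Ioo (0 : ℝ) (1 / ((n : ℝ) + 1))) ⊆ T := by
      intro y hy
      rw [Set.mem_pi] at hy
      refine ⟨fun i => le_of_lt (hy i trivial).1, ?_⟩
      calc ∑ i, y i ≤ ∑ _i : Fin n, 1 / ((n : ℝ) + 1) :=
            Finset.sum_le_sum fun i _ => le_of_lt (hy i trivial).2
        _ = (n : ℝ) * (1 / ((n : ℝ) + 1)) := by simp [mul_comm]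
        _ ≤ 1 := by
            rw [mul_one_div, div_le_one (by positivity)]
            linarith
    refine lt_of_lt_of_le ?_ (measure_mono hB)
    rw [volume_pi_pi]
    simp only [Real.volume_Ioo, sub_zero]
    refine CanonicallyOrderedAdd.prod_pos.mpr fun i _ => ?_
    exact ENNReal.ofReal_pos.mpr (by positivity)
  have hTfin : volume T ≤ 1 := by
    have hBox : T ⊆ Set.univ.pi fun _ : Fin n => Set.Icc (0 : ℝ) 1 := by
      rintro y ⟨hy0, hy1⟩
      rw [Set.mem_pi]
      intro i _
      refine ⟨hy0 i, ?_⟩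
      calc y i ≤ ∑ j, y j := Finset.single_le_sum (fun j _ => hy0 j) (Finset.mem_univ i)
        _ ≤ 1 := hy1
    refine (measure_mono hBox).trans ?_
    rw [volume_pi_pi]
    simp [Real.volume_Icc]
  have h_pos : μH[(n : ℝ)] H ≠ 0 := by
    have h1 := hq'.hausdorffMeasure_image_le (by positivity : (0:ℝ) ≤ (n : ℝ)) H
    rw [hQT] at h1
    simp only [ENNReal.coe_one, ENNReal.one_rpow, one_mul] at h1
    have : (0 : ℝ≥0∞) < μH[(n : ℝ)] H := lt_of_lt_of_le (hμT ▸ hTpos) h1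
    exact this.ne'
  have h_fin : μH[(n : ℝ)] H ≠ ⊤ := by
    have hcompL := hp2e.comp hr'
    have h2 := hcompL.hausdorffMeasure_image_le (by positivity : (0:ℝ) ≤ (n : ℝ)) T
    rw [hRT] at h2
    refine ne_top_of_le_ne_top ?_ h2
    apply ENNReal.mul_ne_top (ENNReal.rpow_ne_top_of_nonneg (by positivity) ENNReal.coe_ne_top)
    rw [hμT]
    exact (lt_of_le_of_lt hTfin ENNReal.one_lt_top).ne
  -- conclusion
  have h_inter_le : μH[(n : ℝ)] (((fun x => (2 : ℝ) • O - x) '' H) ∩ H) ≤ μH[(n : ℝ)] H :=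
    measure_mono Set.inter_subset_right
  have h_inter_fin : μH[(n : ℝ)] (((fun x => (2 : ℝ) • O - x) '' H) ∩ H) ≠ ⊤ :=
    (lt_of_le_of_lt h_inter_le (lt_top_iff_ne_top.mpr h_fin)).ne
  have hchain : μH[(n : ℝ)] H ≤ (Kn : ℝ≥0∞) ^ (n : ℝ) *
      μH[(n : ℝ)] (((fun x => (2 : ℝ) • O - x) '' H) ∩ H) :=
    h_HleKg.trans (mul_le_mul_right (measure_mono h_sub) _)
  have hKtop : ((Kn : ℝ≥0∞) ^ (n : ℝ)) ≠ ⊤ :=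
    ENNReal.rpow_ne_top_of_nonneg (by positivity) ENNReal.coe_ne_top
  have hmultop : (Kn : ℝ≥0∞) ^ (n : ℝ) *
      μH[(n : ℝ)] (((fun x => (2 : ℝ) • O - x) '' H) ∩ H) ≠ ⊤ :=
    ENNReal.mul_ne_top hKtop h_inter_fin
  have hreal : (μH[(n : ℝ)] H).toReal ≤ (n : ℝ) ^ n *
      (μH[(n : ℝ)] (((fun x => (2 : ℝ) • O - x) '' H) ∩ H)).toReal := by
    have := ENNReal.toReal_mono hmultop hchain
    rw [ENNReal.toReal_mul, ← ENNReal.toReal_rpow] at this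
    simpa [hKnR, Real.rpow_natCast] using this
  have ha : 0 < (μH[(n : ℝ)] H).toReal := ENNReal.toReal_pos h_pos h_fin
  rw [div_le_div_iff₀ (by positivity) ha]
  nlinarith [hreal]
end
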